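/- Let F be a field of odd characteristic p and n ≥ 2, k < n positive integers, a ∈ {1,…,p−2}, and d_0,…,d_{n−1} ∈ F. Set D = C_{d_0,…,d_{n−1}} + diag(a,…,a,0,…,0) with a repeated k times. For every polynomial g ∈ F[X] of degree at most n−2 there exist matrices E, M ∈ M_n(F) with D = E + M, E^p = E, and the characteristic polynomial of M equal to X^n + (k·1_F + d_{n−1})X^{n−1} + g. -/

import Mathlib

open Polynomial

/-- The companion matrix of the polynomial `X^n + d_{n-1} X^{n-1} + ⋯ + d_0`. -/
def companionMatrix {F : Type*} [Field F] {n : ℕ} (d : Fin n → F) :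
    Matrix (Fin n) (Fin n) F :=
  Matrix.of fun i j =>
    if (j : ℕ) = n - 1 then -d i else if (i : ℕ) = (j : ℕ) + 1 then 1 else 0

namespace Stmt10Aux

open Matrix Finset

variable {F : Type*} [Field F]

lemma card_filter_lt_fin {n t : ℕ} (h : t ≤ n) :
    ((Finset.univ : Finset (Fin n)).filter (fun i : Fin n => (i : ℕ) < t)).card = t := by
  have e : (Finset.univ : Finset (Fin n)).filter (fun i : Fin n => (i : ℕ) < t)
      = Finset.map (Fin.castLEEmb h) Finset.univ := by
    ext i
    simp only [mem_filter, mem_univ, true_and, mem_map, Fin.castLEEmb_apply]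
    constructor
    · intro hi
      exact ⟨⟨i, hi⟩, rfl⟩
    · rintro ⟨a, rfl⟩
      exact a.isLt
  rw [e, Finset.card_map, Finset.card_univ, Fintype.card_fin]

lemma charmatrix_submatrix_inj {n n' : ℕ} (M : Matrix (Fin n) (Fin n) F)
    (f : Fin n' → Fin n) (hf : Function.Injective f) :
    (Matrix.charmatrix M).submatrix f f = Matrix.charmatrix (M.submatrix f f) := by
  ext i j
  by_cases h : i = j
  · subst h
    simp [Matrix.charmatrix_apply_eq]
  · rw [Matrix.submatrix_apply, Matrix.charmatrix_apply_ne _ _ _ (fun hc => h (hf hc)),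
      Matrix.charmatrix_apply_ne _ _ _ h, Matrix.submatrix_apply]

theorem charpoly_companion_add_diagonal : ∀ (n : ℕ) (d s : Fin n → F),
    (companionMatrix d + Matrix.diagonal s).charpoly =
      (∏ i : Fin n, (X - C (s i))) +
        ∑ j : Fin n, C (d j) *
          ∏ i : Fin n, (if (i : ℕ) < (j : ℕ) then X - C (s i) else 1) := by
  intro n
  induction n with
  | zero =>
      intro d s
      simp [Matrix.charpoly, Matrix.det_fin_zero]
  | succ N ih =>
      intro d s
      cases N with
      | zero =>
          have h00 : (companionMatrix d + Matrix.diagonal s) 0 0 = -d 0 + s 0 := by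
            simp [companionMatrix, Matrix.add_apply]
          rw [Matrix.charpoly]
          rw [Matrix.det_fin_one]
          rw [Matrix.charmatrix_apply_eq, h00]
          simp [map_add, map_neg]
          ring
      | succ K =>
          set M := companionMatrix d + Matrix.diagonal s with hM
          have hM00 : M 0 0 = s 0 := by
            simp [hM, companionMatrix, Matrix.add_apply]
          have hM0l : M 0 ⟨K + 1, by omega⟩ = -d 0 := by
            have : ((⟨K + 1, by omega⟩ : Fin (K + 2)) : ℕ) = K + 2 - 1 := rfl
            simp [hM, companionMatrix, Matrix.add_apply, Matrix.diagonal_apply,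
              Fin.ext_iff]
          rw [Matrix.charpoly, Matrix.det_succ_row_zero, Fin.sum_univ_succ]
          have hzero : ∀ b : Fin (K + 1), b ≠ Fin.last K →
              (-1 : F[X]) ^ ((b.succ : Fin (K + 2)) : ℕ) *
                Matrix.charmatrix M 0 b.succ *
                ((Matrix.charmatrix M).submatrix Fin.succ b.succ.succAbove).det = 0 := by
            intro b hb
            have hMb : M 0 b.succ = 0 := by
              have hb' : (b : ℕ) ≠ K := fun hc => hb (Fin.ext (by simp [hc]))
              simp only [hM, Matrix.add_apply, companionMatrix, Matrix.of_apply,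
                Matrix.diagonal_apply, Fin.val_succ, Fin.val_zero]
              rw [if_neg (by omega)]
              simp
              exact fun hc => absurd hc (Fin.succ_ne_zero b).symm
            rw [Matrix.charmatrix_apply_ne _ _ _ (Fin.succ_ne_zero b).symm, hMb]
            simp
          rw [Finset.sum_eq_single_of_mem (Fin.last K) (Finset.mem_univ _)
            (fun b _ hb => hzero b hb)]
          -- evaluate the j = 0 term
          have hsa0 : (0 : Fin (K + 2)).succAbove = Fin.succ :=
            funext fun i => Fin.zero_succAbove i
          have hsub : M.submatrix Fin.succ Fin.succ =
              companionMatrix (fun i => d i.succ) + Matrix.diagonal (fun i => s i.succ) := by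
            ext i j
            simp only [Matrix.submatrix_apply, hM, Matrix.add_apply, companionMatrix,
              Matrix.of_apply, Matrix.diagonal_apply, Fin.val_succ,
              Nat.add_sub_cancel, Fin.succ_inj]
            have e1 : (j : ℕ) + 1 = K + 1 ↔ (j : ℕ) = K := by omega
            have e2 : (i : ℕ) + 1 = (j : ℕ) + 1 + 1 ↔ (i : ℕ) = (j : ℕ) + 1 := by omega
            rw [if_congr e1 rfl rfl, if_congr e2 rfl rfl]
          have hminor0 : ((Matrix.charmatrix M).submatrix Fin.succ
                ((0 : Fin (K + 2)).succAbove)).det =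
              (∏ i : Fin (K + 1), (X - C (s i.succ))) +
                ∑ j : Fin (K + 1), C (d j.succ) *
                  ∏ i : Fin (K + 1), (if (i : ℕ) < (j : ℕ) then X - C (s i.succ) else 1) := by
            rw [hsa0, charmatrix_submatrix_inj M Fin.succ (Fin.succ_injective _), hsub]
            exact ih (fun i => d i.succ) (fun i => s i.succ)
          -- evaluate the j = last term
          have hlastval : (((Fin.last K).succ : Fin (K + 2)) : ℕ) = K + 1 := rfl
          have hlasteq : ((Fin.last K).succ : Fin (K + 2)) = ⟨K + 1, by omega⟩ := rfl
          have hAlast : Matrix.charmatrix M 0 ((Fin.last K).succ) = C (d 0) := by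
            rw [Matrix.charmatrix_apply_ne _ _ _ (Fin.succ_ne_zero _).symm, hlasteq, hM0l]
            simp
          have hsal : ((Fin.last K).succ : Fin (K + 2)).succAbove = Fin.castSucc := by
            rw [Fin.succ_last]
            exact Fin.succAbove_last
          have hminorl : ((Matrix.charmatrix M).submatrix Fin.succ
                (((Fin.last K).succ : Fin (K + 2)).succAbove)).det = (-1 : F[X]) ^ (K + 1) := by
            rw [hsal]
            have hbt : ((Matrix.charmatrix M).submatrix Fin.succ Fin.castSucc).BlockTriangular id := by
              intro i j hij
              have hne : (i.succ : Fin (K + 2)) ≠ j.castSucc := by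
                intro hc
                have hc' : (i : ℕ) + 1 = (j : ℕ) := by simpa using congrArg Fin.val hc
                have : (j : ℕ) < (i : ℕ) := hij
                omega
              rw [Matrix.submatrix_apply, Matrix.charmatrix_apply_ne _ _ _ hne]
              have : M i.succ j.castSucc = 0 := by
                have hj : (j : ℕ) < K + 1 := j.isLt
                have hij' : (j : ℕ) < (i : ℕ) := hij
                simp only [hM, Matrix.add_apply, companionMatrix, Matrix.of_apply,
                  Matrix.diagonal_apply, Fin.val_succ, Fin.coe_castSucc]
                rw [if_neg (by omega), if_neg (by omega), if_neg hne]
                simp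
              rw [this]
              simp
            rw [Matrix.det_of_upperTriangular hbt]
            have hdiag : ∀ i : Fin (K + 1),
                ((Matrix.charmatrix M).submatrix Fin.succ Fin.castSucc) i i = -1 := by
              intro i
              have hne : (i.succ : Fin (K + 2)) ≠ i.castSucc := by
                intro hc
                have hc' : (i : ℕ) + 1 = (i : ℕ) := by simpa using congrArg Fin.val hc
                omega
              rw [Matrix.submatrix_apply, Matrix.charmatrix_apply_ne _ _ _ hne]
              have : M i.succ i.castSucc = 1 := by
                have hi : (i : ℕ) < K + 1 := i.isLt
                simp only [hM, Matrix.add_apply, companionMatrix, Matrix.of_apply,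
                  Matrix.diagonal_apply, Fin.val_succ, Fin.coe_castSucc]
                rw [if_neg (by omega), if_neg hne]
                simp
              rw [this]
              simp
            calc ∏ i : Fin (K + 1), ((Matrix.charmatrix M).submatrix Fin.succ Fin.castSucc) i i
                = ∏ _i : Fin (K + 1), (-1 : F[X]) := Finset.prod_congr rfl fun i _ => hdiag i
              _ = (-1 : F[X]) ^ (K + 1) := by
                  rw [Finset.prod_const, Finset.card_univ, Fintype.card_fin]
          rw [Matrix.charmatrix_apply_eq, hM00, hminor0, hAlast, hminorl, hlastval]
          -- now pure algebra
          have hprod : (∏ i : Fin (K + 2), (X - C (s i)))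
              = (X - C (s 0)) * ∏ i : Fin (K + 1), (X - C (s i.succ)) :=
            Fin.prod_univ_succ _
          have hsum : (∑ j : Fin (K + 2), C (d j) *
                ∏ i : Fin (K + 2), (if (i : ℕ) < (j : ℕ) then X - C (s i) else 1))
              = C (d 0) + ∑ j : Fin (K + 1), C (d j.succ) *
                  ((X - C (s 0)) *
                    ∏ i : Fin (K + 1), (if (i : ℕ) < (j : ℕ) then X - C (s i.succ) else 1)) := by
            rw [Fin.sum_univ_succ]
            congr 1
            · simp
            · refine Finset.sum_congr rfl fun j _ => ?_
              rw [Fin.prod_univ_succ]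
              simp [Fin.val_succ, Nat.succ_lt_succ_iff]
          rw [hprod, hsum]
          simp only [Fin.val_zero, pow_zero, one_mul]
          rw [mul_add, Finset.mul_sum]
          have : ∀ j : Fin (K + 1), (X - C (s 0)) * (C (d j.succ) *
                ∏ i : Fin (K + 1), (if (i : ℕ) < (j : ℕ) then X - C (s i.succ) else 1))
              = C (d j.succ) * ((X - C (s 0)) *
                ∏ i : Fin (K + 1), (if (i : ℕ) < (j : ℕ) then X - C (s i.succ) else 1)) := by
            intro j
            ring
          rw [Finset.sum_congr rfl fun j _ => this j]
          have hsq : ((-1 : F[X]) ^ (K + 1)) * C (d 0) * ((-1 : F[X]) ^ (K + 1)) = C (d 0) := by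
            rw [mul_comm, ← mul_assoc, ← pow_add]
            rw [Even.neg_one_pow ⟨K + 1, by ring⟩, one_mul]
          rw [hsq]
          ring

theorem exists_sum_C_mul_eq :
    ∀ (m : ℕ) (q : Fin m → F[X]), (∀ j, (q j).Monic) → (∀ j, (q j).natDegree = (j : ℕ)) →
      ∀ h : F[X], h.degree < (m : ℕ) → ∃ u : Fin m → F, ∑ j, C (u j) * q j = h := by
  intro m
  induction m with
  | zero =>
      intro q _ _ h hh
      refine ⟨Fin.elim0, ?_⟩
      have : h = 0 := by
        ext b
        rw [(Polynomial.degree_lt_iff_coeff_zero h 0).1 (by exact_mod_cast hh) b (Nat.zero_le b)]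
        simp
      simp [this]
  | succ m ih =>
      intro q hmon hdeg h hh
      have hql : (q (Fin.last m)).natDegree = m := by
        rw [hdeg]; rfl
      have hcoeffl : (q (Fin.last m)).coeff m = 1 := by
        have := (hmon (Fin.last m)).coeff_natDegree
        rwa [hql] at this
      set c : F := h.coeff m with hc
      have hdeg' : (h - C c * q (Fin.last m)).degree < (m : ℕ) := by
        rw [Polynomial.degree_lt_iff_coeff_zero]
        intro b hb
        have hb' : m ≤ b := by exact_mod_cast hb
        rw [Polynomial.coeff_sub, Polynomial.coeff_C_mul]
        rcases eq_or_lt_of_le hb' with hbe | hbl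
        · rw [← hbe, hcoeffl, mul_one, hc, sub_self]
        · have h1 : h.coeff b = 0 := by
            apply Polynomial.coeff_eq_zero_of_degree_lt
            exact lt_of_lt_of_le hh (by exact_mod_cast hbl)
          have h2 : (q (Fin.last m)).coeff b = 0 :=
            Polynomial.coeff_eq_zero_of_natDegree_lt (by omega)
          rw [h1, h2, mul_zero, sub_zero]
      obtain ⟨u', hu'⟩ := ih (fun j => q j.castSucc) (fun j => hmon _)
        (fun j => by rw [hdeg]; rfl) (h - C c * q (Fin.last m)) hdeg'
      refine ⟨Fin.snoc u' c, ?_⟩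
      rw [Fin.sum_univ_castSucc]
      have e1 : ∀ j : Fin m, (Fin.snoc u' c : Fin (m+1) → F) j.castSucc = u' j := fun j =>
        Fin.snoc_castSucc _ _ _
      have e2 : (Fin.snoc u' c : Fin (m+1) → F) (Fin.last m) = c := Fin.snoc_last _ _
      rw [Finset.sum_congr rfl fun j _ => by rw [e1 j], e2, hu']
      ring

lemma conj_pow_eq {A : Type*} [Monoid A] (S S' B : A) (h1 : S * S' = 1) (h2 : S' * S = 1) :
    ∀ t : ℕ, (S * B * S') ^ t = S * B ^ t * S'
  | 0 => by simpa using h1.symm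
  | (t + 1) => by
      rw [pow_succ, conj_pow_eq S S' B h1 h2 t, pow_succ]
      calc S * B ^ t * S' * (S * B * S') = S * B ^ t * (S' * S) * B * S' := by
            simp [mul_assoc]
        _ = S * (B ^ t * B) * S' := by rw [h2]; simp [mul_assoc]

lemma exists_beta (p : ℕ) [Fact p.Prime] (hp : Odd p) (m : ℕ) (Ks : ZMod p) :
    ∃ β : Fin (m + 2) → ZMod p, (∑ i, β i) = Ks ∧
      ∀ i : Fin (m + 2), (i : ℕ) < m + 1 → β i ≠ β ⟨m + 1, by omega⟩ := by
  have hp3 : 3 ≤ p := by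
    have h2 := (Fact.out : p.Prime).two_le
    rcases Nat.lt_or_ge p 3 with h | h
    · interval_cases p
      · exact absurd hp (by decide)
    · exact h
  by_cases hex : ∃ s : ZMod p, ((m + 2 : ℕ) : ZMod p) * s ≠ Ks
  · obtain ⟨s, hs⟩ := hex
    refine ⟨fun i => if (i : ℕ) = m + 1 then Ks - ((m + 1 : ℕ) : ZMod p) * s else s, ?_, ?_⟩
    · dsimp only
      rw [Fin.sum_univ_eq_sum_range
        (fun t => if t = m + 1 then Ks - ((m + 1 : ℕ) : ZMod p) * s else s) (m + 2)]
      have e : ∀ t ∈ Finset.range (m + 2),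
          (if t = m + 1 then Ks - ((m + 1 : ℕ) : ZMod p) * s else s)
            = s + (if t = m + 1 then Ks - ((m + 1 : ℕ) : ZMod p) * s - s else 0) := by
        intro t _
        split_ifs <;> ring
      rw [Finset.sum_congr rfl e, Finset.sum_add_distrib, Finset.sum_const,
        Finset.sum_ite_eq' (Finset.range (m + 2)) (m + 1)]
      rw [if_pos (Finset.mem_range.2 (by omega)), Finset.card_range, nsmul_eq_mul]
      push_cast
      ring
    · intro i hi
      dsimp only
      rw [if_neg (by omega), if_pos rfl]
      intro hc
      apply hs
      push_cast at hc ⊢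
      linear_combination hc
  · push_neg at hex
    have h0 : Ks = 0 := by
      have := hex 0
      rw [mul_zero] at this
      exact this.symm
    have hm2 : ((m + 2 : ℕ) : ZMod p) = 0 := by
      have := hex 1
      rwa [mul_one, h0] at this
    have h2ne : (2 : ZMod p) ≠ 0 := by
      have hnd : ¬ (p ∣ 2) := by
        intro hd
        have := Nat.le_of_dvd (by norm_num) hd
        omega
      intro hc
      apply hnd
      have h2c : ((2 : ℕ) : ZMod p) = 0 := by exact_mod_cast hc
      exact (ZMod.natCast_eq_zero_iff 2 p).1 h2c
    refine ⟨fun i => if (i : ℕ) = m + 1 then 0 else if (i : ℕ) = m then 2 else 1, ?_, ?_⟩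
    · dsimp only
      rw [Fin.sum_univ_eq_sum_range
        (fun t => if t = m + 1 then (0 : ZMod p) else if t = m then 2 else 1) (m + 2)]
      have e : ∀ t ∈ Finset.range (m + 2),
          (if t = m + 1 then (0 : ZMod p) else if t = m then 2 else 1)
            = 1 + (if t = m + 1 then (-1 : ZMod p) else 0) + (if t = m then 1 else 0) := by
        intro t _
        by_cases h1 : t = m + 1
        · subst h1
          rw [if_pos rfl, if_pos rfl, if_neg (by omega)]
          ring
        · rw [if_neg h1, if_neg h1]
          by_cases h2 : t = m
          · rw [if_pos h2, if_pos h2]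
            ring
          · rw [if_neg h2, if_neg h2]
            ring
      rw [Finset.sum_congr rfl e, Finset.sum_add_distrib, Finset.sum_add_distrib,
        Finset.sum_const, Finset.sum_ite_eq' (Finset.range (m + 2)) (m + 1),
        Finset.sum_ite_eq' (Finset.range (m + 2)) m]
      rw [if_pos (Finset.mem_range.2 (by omega)), if_pos (Finset.mem_range.2 (by omega)),
        Finset.card_range, nsmul_eq_mul, mul_one, h0]
      push_cast at hm2 ⊢
      linear_combination hm2
    · intro i hi
      dsimp only
      rw [if_neg (by omega), if_pos rfl]
      split_ifs
      · exact h2ne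
      · exact one_ne_zero

end Stmt10Aux

open Stmt10Aux in
theorem stmt_10 {F : Type*} [Field F] (p : ℕ) [Fact p.Prime] (hp : Odd p)
    [CharP F p] (n k a : ℕ) (hn : 2 ≤ n) (hk : 0 < k) (hkn : k < n)
    (ha1 : 1 ≤ a) (ha2 : a ≤ p - 2) (d : Fin n → F)
    (D : Matrix (Fin n) (Fin n) F)
    (hD : D = companionMatrix d +
        Matrix.diagonal (fun i : Fin n => if (i : ℕ) < k then (a : F) else 0))
    (g : Polynomial F) (hg : g.degree ≤ (n - 2 : ℕ)) :
    ∃ E M : Matrix (Fin n) (Fin n) F,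
      D = E + M ∧ E ^ p = E ∧
        M.charpoly = X ^ n + C ((k : F) + d ⟨n - 1, by omega⟩) * X ^ (n - 1) + g := by
  obtain ⟨m, rfl⟩ : ∃ m, n = m + 2 := ⟨n - 2, by omega⟩
  have hgm : g.degree ≤ (m : ℕ) := hg
  have hkm : k ≤ m + 1 := by omega
  set lst : Fin (m + 2) := ⟨m + 1, by omega⟩ with hlst
  let φ : ZMod p →+* F := ZMod.castHom dvd_rfl F
  obtain ⟨β, hβsum, hβne⟩ := exists_beta p hp m ((k * (a + 1) : ℕ) : ZMod p)
  set βF : Fin (m + 2) → F := fun i => φ (β i) with hβF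
  set Δ : Fin (m + 2) → F := fun i => if (i : ℕ) < k then (a : F) else 0 with hΔ
  set sv : Fin (m + 2) → F := fun i => Δ i - βF i with hsv
  set qq : ℕ → F[X] :=
    fun t => ∏ i : Fin (m + 2), if (i : ℕ) < t then (X - C (sv i)) else 1 with hqq
  -- properties of the auxiliary polynomials
  have hq_monic : ∀ t : ℕ, (qq t).Monic := by
    intro t
    refine Polynomial.monic_prod_of_monic _ _ fun i _ => ?_
    split_ifs
    · exact Polynomial.monic_X_sub_C _
    · exact Polynomial.monic_one
  have hq_deg : ∀ t : ℕ, t ≤ m + 2 → (qq t).natDegree = t := by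
    intro t ht
    rw [hqq]
    dsimp only
    rw [Polynomial.natDegree_prod_of_monic _ _ (fun i _ => by
      split_ifs
      · exact Polynomial.monic_X_sub_C _
      · exact Polynomial.monic_one)]
    have e : ∀ i : Fin (m + 2),
        ((if (i : ℕ) < t then (X - C (sv i)) else 1).natDegree)
          = if (i : ℕ) < t then 1 else 0 := by
      intro i
      split_ifs
      · exact Polynomial.natDegree_X_sub_C _
      · exact Polynomial.natDegree_one
    rw [Finset.sum_congr rfl fun i _ => e i, Finset.sum_ite, Finset.sum_const,
      Finset.sum_const_zero, add_zero, card_filter_lt_fin ht, smul_eq_mul, mul_one]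
  have hq_coeff0 : ∀ (j : Fin (m + 2)) (b : ℕ), (j : ℕ) < b → (qq (j : ℕ)).coeff b = 0 := by
    intro j b hjb
    apply Polynomial.coeff_eq_zero_of_natDegree_lt
    rw [hq_deg (j : ℕ) (by omega)]
    exact hjb
  have hq_coeff1 : (qq (m + 1)).coeff (m + 1) = 1 := by
    have h1 := (hq_monic (m + 1)).coeff_natDegree
    rwa [hq_deg (m + 1) (by omega)] at h1
  -- the big product
  have hPmon : (∏ i : Fin (m + 2), (X - C (sv i))).Monic :=
    Polynomial.monic_prod_of_monic _ _ fun i _ => Polynomial.monic_X_sub_C _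
  have hPdeg : (∏ i : Fin (m + 2), (X - C (sv i))).natDegree = m + 2 := by
    rw [Polynomial.natDegree_prod_of_monic _ _
      (fun i _ => Polynomial.monic_X_sub_C _)]
    simp [Polynomial.natDegree_X_sub_C]
  have hPnext : (∏ i : Fin (m + 2), (X - C (sv i))).coeff (m + 1) = -∑ i, sv i := by
    have h1 := Polynomial.prod_X_sub_C_nextCoeff (s := Finset.univ) sv
    rwa [Polynomial.nextCoeff_of_natDegree_pos (by rw [hPdeg]; omega), hPdeg] at h1
  -- the sum of sv
  have hsum_sv : (∑ i, sv i) = (k : F) * a - ((k * (a + 1) : ℕ) : F) := by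
    rw [hsv]
    dsimp only
    rw [Finset.sum_sub_distrib]
    congr 1
    · rw [hΔ]
      dsimp only
      rw [Finset.sum_ite, Finset.sum_const, Finset.sum_const_zero, add_zero,
        card_filter_lt_fin (by omega : k ≤ m + 2), nsmul_eq_mul]
    · rw [hβF]
      dsimp only
      rw [← map_sum, hβsum, map_natCast]
  -- the target polynomial and the residual h
  set f : F[X] := X ^ (m + 2) + C ((k : F) + d lst) * X ^ (m + 1) + g with hf
  set h : F[X] := f - (∏ i : Fin (m + 2), (X - C (sv i)))
      - ∑ j : Fin (m + 2), C (d j) * qq (j : ℕ) with hh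
  have hSd : ∀ b : ℕ, m + 1 ≤ b →
      (∑ j : Fin (m + 2), C (d j) * qq (j : ℕ)).coeff b
        = if b = m + 1 then d lst else 0 := by
    intro b hb
    rw [Polynomial.finset_sum_coeff]
    by_cases hbe : b = m + 1
    · subst hbe
      rw [Finset.sum_eq_single_of_mem (Fin.last (m + 1)) (Finset.mem_univ _)
        (fun j _ hj => by
          rw [Polynomial.coeff_C_mul, hq_coeff0 j (m + 1)
            (by
              have := j.isLt
              have hne : (j : ℕ) ≠ m + 1 := fun hc => hj (Fin.ext hc)
              omega), mul_zero])]
      rw [if_pos rfl, Polynomial.coeff_C_mul]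
      have : ((Fin.last (m + 1) : Fin (m + 2)) : ℕ) = m + 1 := rfl
      rw [this, hq_coeff1, mul_one]
      rfl
    · rw [if_neg hbe]
      refine Finset.sum_eq_zero fun j _ => ?_
      rw [Polynomial.coeff_C_mul, hq_coeff0 j b (by have := j.isLt; omega), mul_zero]
  have hgb : ∀ b : ℕ, m + 1 ≤ b → g.coeff b = 0 := by
    intro b hb
    apply Polynomial.coeff_eq_zero_of_degree_lt
    exact lt_of_le_of_lt hgm (by exact_mod_cast (by omega : m < b))
  have hdegh : h.degree < ((m + 1 : ℕ) : WithBot ℕ) := by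
    rw [Polynomial.degree_lt_iff_coeff_zero]
    intro b hb
    have hb' : m + 1 ≤ b := by exact_mod_cast hb
    rw [hh, hf]
    simp only [Polynomial.coeff_sub, Polynomial.coeff_add, Polynomial.coeff_C_mul,
      Polynomial.coeff_X_pow]
    rw [hSd b hb', hgb b hb']
    rcases eq_or_lt_of_le hb' with hbe | hbl
    · rw [← hbe]
      rw [hPnext, hsum_sv, if_neg (by omega : ¬ (m + 1 = m + 2)), if_pos rfl, if_pos rfl]
      push_cast
      ring
    · have hP0 : (∏ i : Fin (m + 2), (X - C (sv i))).coeff b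
          = if b = m + 2 then 1 else 0 := by
        by_cases hbb : b = m + 2
        · subst hbb
          rw [if_pos rfl]
          have := hPmon.coeff_natDegree
          rwa [hPdeg] at this
        · rw [if_neg hbb]
          apply Polynomial.coeff_eq_zero_of_natDegree_lt
          rw [hPdeg]
          omega
      have e1 : ¬ (b = m + 1) := by omega
      rw [hP0]
      by_cases hbb : b = m + 2
      · simp only [if_pos hbb, if_neg e1]
        ring
      · simp only [if_neg hbb, if_neg e1]
        ring
  obtain ⟨u, hu⟩ := exists_sum_C_mul_eq (m + 1) (fun j : Fin (m + 1) => qq (j : ℕ))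
    (fun j => hq_monic _) (fun j => hq_deg _ (by have := j.isLt; omega)) h hdegh
  set c : Fin (m + 2) → F := fun i => if hi : (i : ℕ) < m + 1 then u ⟨(i : ℕ), hi⟩ else 0
    with hc
  set dd : Fin (m + 2) → F := fun i => d i + c i with hdd
  have hclst : c lst = 0 := by
    rw [hc]
    dsimp only
    rw [dif_neg (show ¬ ((lst : ℕ) < m + 1) by simp [hlst])]
  -- matrices
  set x : Fin (m + 2) → F := fun i => if i = lst then 0 else c i / (βF lst - βF i) with hx
  set Nm : Matrix (Fin (m + 2)) (Fin (m + 2)) F :=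
    Matrix.of (fun i j => if j = lst then x i else 0) with hNm
  set Dg : Matrix (Fin (m + 2)) (Fin (m + 2)) F := Matrix.diagonal βF with hDg
  set E : Matrix (Fin (m + 2)) (Fin (m + 2)) F := (1 + Nm) * Dg * (1 - Nm) with hE
  have hxlst : x lst = 0 := by
    rw [hx]
    dsimp only
    rw [if_pos rfl]
  have hβinj : ∀ i : Fin (m + 2), i ≠ lst → βF lst - βF i ≠ 0 := by
    intro i hi
    rw [hβF]
    dsimp only
    rw [sub_ne_zero]
    intro hc'
    have hβi : β i ≠ β lst := by
      apply hβne
      have := i.isLt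
      have : (i : ℕ) ≠ m + 1 := fun hc'' => hi (Fin.ext hc'')
      omega
    exact hβi (φ.injective hc'.symm)
  have hNN : Nm * Nm = 0 := by
    ext i j
    rw [Matrix.mul_apply]
    rw [Finset.sum_eq_single_of_mem lst (Finset.mem_univ _) (fun l _ hl => by
      rw [hNm]
      simp only [Matrix.of_apply]
      rw [if_neg hl, zero_mul])]
    rw [hNm]
    simp [hxlst]
  have hS1 : (1 + Nm) * (1 - Nm) = 1 := by
    have e : (1 + Nm) * (1 - Nm) = 1 - Nm * Nm := by noncomm_ring
    rw [e, hNN, sub_zero]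
  have hS2 : (1 - Nm) * (1 + Nm) = 1 := by
    have e : (1 - Nm) * (1 + Nm) = 1 - Nm * Nm := by noncomm_ring
    rw [e, hNN, sub_zero]
  have hNDN : Nm * Dg * Nm = 0 := by
    ext i j
    rw [Matrix.mul_apply]
    rw [Finset.sum_eq_single_of_mem lst (Finset.mem_univ _) (fun l _ hl => by
      rw [hDg, Matrix.mul_diagonal, hNm]
      simp only [Matrix.of_apply]
      rw [if_neg hl, zero_mul, zero_mul])]
    rw [hDg, Matrix.mul_diagonal, hNm]
    simp [hxlst]
  have hEentry : ∀ i j, E i j = (if i = j then βF i else 0) + (if j = lst then c i else 0) := by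
    intro i j
    have e : E = Dg + (Nm * Dg - Dg * Nm) - Nm * Dg * Nm := by
      rw [hE]; noncomm_ring
    rw [e, hNDN, sub_zero]
    rw [Matrix.add_apply, Matrix.sub_apply, hDg, Matrix.mul_diagonal, Matrix.diagonal_mul,
      Matrix.diagonal_apply, hNm]
    simp only [Matrix.of_apply]
    by_cases hj : j = lst
    · subst hj
      simp only [if_pos (rfl : (lst : Fin (m + 2)) = lst)]
      by_cases hi : i = lst
      · subst hi
        rw [hxlst, hclst]
        simp
      · have hne := hβinj i hi
        rw [hx]
        dsimp only
        simp only [if_neg hi]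
        simp only [↓reduceIte]
        rw [mul_comm (βF i), ← mul_sub, div_mul_cancel₀ _ hne]
    · simp only [if_neg hj]
      ring
  have hDE : D - E = companionMatrix dd + Matrix.diagonal sv := by
    ext i j
    rw [Matrix.sub_apply, hD, Matrix.add_apply, Matrix.add_apply, hEentry i j]
    simp only [companionMatrix, Matrix.of_apply, Matrix.diagonal_apply]
    rw [hsv, hΔ, hdd]
    dsimp only
    have hjl : (j = lst) ↔ ((j : ℕ) = m + 2 - 1) := by
      constructor
      · intro hj; subst hj; rfl
      · intro hj
        apply Fin.ext
        show (j : ℕ) = (lst : ℕ)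
        have hlv : (lst : ℕ) = m + 1 := rfl
        omega
    rw [if_congr hjl rfl rfl]
    simp only [Fin.ext_iff]
    split_ifs <;> first | ring | (exfalso; omega)
  refine ⟨E, D - E, by abel, ?_, ?_⟩
  · rw [hE, conj_pow_eq _ _ _ hS1 hS2 p]
    have hb : βF ^ p = βF := by
      funext i
      show (βF i) ^ p = βF i
      rw [hβF]
      dsimp only
      rw [← map_pow, ZMod.pow_card]
    have hDgp : Dg ^ p = Dg := by
      rw [hDg, Matrix.diagonal_pow, hb]
    rw [hDgp]
  · show (D - E).charpoly = X ^ (m + 2) + C ((k : F) + d lst) * X ^ (m + 1) + g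
    rw [hDE, charpoly_companion_add_diagonal (m + 2) dd sv]
    have hsplit : (∑ j : Fin (m + 2), C (dd j) *
          ∏ i : Fin (m + 2), (if (i : ℕ) < (j : ℕ) then X - C (sv i) else 1))
        = (∑ j : Fin (m + 2), C (d j) * qq (j : ℕ))
          + ∑ j : Fin (m + 2), C (c j) * qq (j : ℕ) := by
      rw [← Finset.sum_add_distrib]
      refine Finset.sum_congr rfl fun j _ => ?_
      rw [hdd]
      dsimp only
      rw [map_add, add_mul]
    have hcsum : (∑ j : Fin (m + 2), C (c j) * qq (j : ℕ)) = h := by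
      rw [Fin.sum_univ_castSucc]
      have hcl : c (Fin.last (m + 1)) = 0 := hclst
      rw [hcl, map_zero, zero_mul, add_zero]
      rw [← hu]
      refine Finset.sum_congr rfl fun j _ => ?_
      have e1 : c j.castSucc = u j := by
        rw [hc]
        dsimp only
        rw [dif_pos (show ((j.castSucc : Fin (m + 2)) : ℕ) < m + 1 by simp; omega)]
        exact congrArg u (Fin.ext (by simp))
      rw [e1, Fin.coe_castSucc]
    rw [hsplit, hcsum, hh]
    ring
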